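/- Let A be a nonnegative irreducible real n×n matrix with n ≥ 1, let r ≥ 0 and let x ∈ ℝ^n with x ≥ 0, A·x − r·x ≥ 0 (entrywise) and A·x ≠ r·x. Then there exists r' > r and a vector y ∈ ℝ^n with y ≥ 0, Σᵢ yᵢ = 1, and A·y − r'·y ≥ 0 entrywise. -/

import Mathlib

open Matrix Finset

private lemma pow_entry_nonneg' {n : ℕ} (A : Matrix (Fin n) (Fin n) ℝ)
    (hA : ∀ i j, 0 ≤ A i j) (m : ℕ) : ∀ i j, 0 ≤ (A ^ m) i j := by
  induction m with
  | zero =>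
    intro i j
    simp only [pow_zero, Matrix.one_apply]
    split <;> norm_num
  | succ m ih =>
    intro i j
    rw [pow_succ, Matrix.mul_apply]
    exact Finset.sum_nonneg fun k _ => mul_nonneg (ih i k) (hA k j)

theorem exists_larger_collatz_wielandt {n : ℕ} (hn : 1 ≤ n)
    (A : Matrix (Fin n) (Fin n) ℝ)
    (hA : ∀ i j, 0 ≤ A i j)
    (hirr : ∀ i j, ∃ k : ℕ, 1 ≤ k ∧ 0 < (A ^ k) i j)
    (r : ℝ) (hr : 0 ≤ r) (x : Fin n → ℝ) (hx : ∀ i, 0 ≤ x i)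
    (hAx : ∀ i, 0 ≤ A.mulVec x i - r * x i)
    (hne : A.mulVec x ≠ r • x) :
    ∃ r' : ℝ, r < r' ∧ ∃ y : Fin n → ℝ,
      (∀ i, 0 ≤ y i) ∧ (∑ i, y i) = 1 ∧ ∀ i, 0 ≤ A.mulVec y i - r' * y i := by
  have hne' : Nonempty (Fin n) := ⟨⟨0, hn⟩⟩
  choose k hk1 hk2 using hirr
  set N : ℕ := Finset.univ.sup (fun p : Fin n × Fin n => k p.1 p.2) with hN
  set C : Matrix (Fin n) (Fin n) ℝ := ∑ m ∈ Finset.range (N + 1), A ^ m with hC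
  -- entries of C are positive
  have hCnn : ∀ i j, 0 ≤ C i j := by
    intro i j
    rw [hC, Matrix.sum_apply]
    exact Finset.sum_nonneg fun m _ => pow_entry_nonneg' A hA m i j
  have hCpos : ∀ i j, 0 < C i j := by
    intro i j
    have hkN : k i j ≤ N := Finset.le_sup (f := fun p : Fin n × Fin n => k p.1 p.2)
      (Finset.mem_univ (i, j))
    have hmem : k i j ∈ Finset.range (N + 1) := Finset.mem_range.2 (Nat.lt_succ_of_le hkN)
    rw [hC, Matrix.sum_apply]
    refine lt_of_lt_of_le (hk2 i j) ?_
    exact Finset.single_le_sum (fun m _ => pow_entry_nonneg' A hA m i j) hmem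
  -- A and C commute
  have hcomm : A * C = C * A := by
    rw [hC, Finset.mul_sum, Finset.sum_mul]
    refine Finset.sum_congr rfl fun m _ => ?_
    rw [← pow_succ, ← pow_succ']
  set z : Fin n → ℝ := fun i => A.mulVec x i - r * x i with hz
  have hznn : ∀ i, 0 ≤ z i := hAx
  have hzne : ∃ j, 0 < z j := by
    by_contra h
    push_neg at h
    apply hne
    funext i
    have h0 : z i = 0 := le_antisymm (h i) (hznn i)
    have : A.mulVec x i = r * x i := by
      have := h0
      simp only [hz, sub_eq_zero] at this
      exact this
    simpa using this
  have hxne : ∃ j, 0 < x j := by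
    by_contra h
    push_neg at h
    have hx0 : x = 0 := funext fun i => le_antisymm (h i) (hx i)
    apply hne
    rw [hx0]
    simp
  set w : Fin n → ℝ := C.mulVec x with hw
  set v : Fin n → ℝ := C.mulVec z with hv
  have hwpos : ∀ i, 0 < w i := by
    intro i
    obtain ⟨j, hj⟩ := hxne
    rw [hw, Matrix.mulVec, dotProduct]
    refine lt_of_lt_of_le (mul_pos (hCpos i j) hj) ?_
    exact Finset.single_le_sum (fun m _ => mul_nonneg (hCnn i m) (hx m)) (Finset.mem_univ j)
  have hvpos : ∀ i, 0 < v i := by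
    intro i
    obtain ⟨j, hj⟩ := hzne
    rw [hv, Matrix.mulVec, dotProduct]
    refine lt_of_lt_of_le (mul_pos (hCpos i j) hj) ?_
    exact Finset.single_le_sum (fun m _ => mul_nonneg (hCnn i m) (hznn m)) (Finset.mem_univ j)
  -- key identity: A.mulVec w - r • w = v
  have hkey : ∀ i, A.mulVec w i - r * w i = v i := by
    intro i
    have h1 : A.mulVec w = C.mulVec (A.mulVec x) := by
      rw [hw, Matrix.mulVec_mulVec, hcomm, ← Matrix.mulVec_mulVec]
    have h2 : z = A.mulVec x - r • x := by
      funext i; simp [hz, Pi.sub_apply, Pi.smul_apply, smul_eq_mul]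
    rw [hv, h2, Matrix.mulVec_sub, Matrix.mulVec_smul, h1]
    simp [hw, Pi.sub_apply, Pi.smul_apply, smul_eq_mul]
  -- choose epsilon
  set ε : ℝ := Finset.univ.inf' Finset.univ_nonempty (fun i => v i / w i) with hε
  have hεpos : 0 < ε := by
    rw [hε, Finset.lt_inf'_iff]
    exact fun i _ => div_pos (hvpos i) (hwpos i)
  have hεle : ∀ i, ε * w i ≤ v i := by
    intro i
    have : ε ≤ v i / w i := Finset.inf'_le (fun i => v i / w i) (Finset.mem_univ i)
    calc ε * w i ≤ (v i / w i) * w i := by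
          exact mul_le_mul_of_nonneg_right this (hwpos i).le
      _ = v i := div_mul_cancel₀ _ (hwpos i).ne'
  set S : ℝ := ∑ i, w i with hS
  have hSpos : 0 < S := Finset.sum_pos (fun i _ => hwpos i) Finset.univ_nonempty
  refine ⟨r + ε, by linarith, fun i => S⁻¹ * w i, fun i => mul_nonneg (inv_nonneg.2 hSpos.le) (hwpos i).le, ?_, ?_⟩
  · rw [← Finset.mul_sum, ← hS, inv_mul_cancel₀ hSpos.ne']
  · intro i
    have heq : A.mulVec (fun j => S⁻¹ * w j) = fun j => S⁻¹ * A.mulVec w j := by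
      have : (fun j => S⁻¹ * w j) = S⁻¹ • w := by funext j; simp [smul_eq_mul]
      rw [this, Matrix.mulVec_smul]
      funext j; simp [smul_eq_mul]
    rw [heq]
    have h1 : A.mulVec w i - (r + ε) * w i = v i - ε * w i := by
      have := hkey i; ring_nf; ring_nf at this; linarith
    have h2 : 0 ≤ A.mulVec w i - (r + ε) * w i := by
      rw [h1]; linarith [hεle i]
    have : S⁻¹ * A.mulVec w i - (r + ε) * (S⁻¹ * w i)
        = S⁻¹ * (A.mulVec w i - (r + ε) * w i) := by ring
    rw [this]
    exact mul_nonneg (inv_nonneg.2 hSpos.le) h2
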